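/- Let (X_n, A_n)_{n∈ℕ} be measurable spaces and (κ_n : ∏_{i≤n} X_i ⇝ X_{n+1})_{n∈ℕ} Markov kernels. For all natural numbers a and b ≤ c, the pushforward of the partial-trajectory kernel η_{a,c} under the restriction map π_{c→b} : ∏_{i≤c} X_i → ∏_{i≤b} X_i equals η_{a,b}. -/
import Mathlib

open MeasureTheory ProbabilityTheory Preorder Filter
open scoped ENNReal ProbabilityTheory Topology

variable {X : ℕ → Type*} [∀ n, MeasurableSpace (X n)]

/-- Canonical map gluing a trajectory up to time `b` with a point of `X (b + 1)` into a
trajectory up to time `b + 1`. -/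
def IicProdSucc (b : ℕ) (p : (Π i : Finset.Iic b, X i) × X (b + 1)) :
    Π i : Finset.Iic (b + 1), X i :=
  fun i ↦ if h : i.1 ≤ b then p.1 ⟨i.1, Finset.mem_Iic.2 h⟩
    else cast (congrArg X (Nat.le_antisymm (Finset.mem_Iic.1 i.2)
      (Nat.lt_of_not_le h))).symm p.2

/-- The partial trajectory kernel `η_{a,b}` built from the kernels `κ n`: for `b ≤ a` it is the
deterministic kernel given by the restriction map, and `η_{a,b+1}` is obtained from `η_{a,b}` by
composing with the product of the identity kernel and `κ b`. -/
noncomputable def partialTraj (κ : ∀ n, Kernel (Π i : Finset.Iic n, X i) (X (n + 1))) (a : ℕ) :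
    (b : ℕ) → Kernel (Π i : Finset.Iic a, X i) (Π i : Finset.Iic b, X i)
  | 0 => Kernel.deterministic (frestrictLe₂ (Nat.zero_le a)) (measurable_frestrictLe₂ _)
  | b + 1 =>
    if h : b + 1 ≤ a then Kernel.deterministic (frestrictLe₂ h) (measurable_frestrictLe₂ h)
    else ((Kernel.id ×ₖ κ b) ∘ₖ partialTraj κ a b).map (IicProdSucc b)

lemma measurable_IicProdSucc (b : ℕ) :
    Measurable (IicProdSucc (X := X) b) := by
  refine measurable_pi_lambda _ fun i ↦ ?_
  unfold IicProdSucc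
  by_cases h : i.1 ≤ b
  · simp only [h, dif_pos]
    exact (measurable_pi_apply _).comp measurable_fst
  · simp only [h, dif_neg, not_false_iff]
    have : (fun (p : (Π i : Finset.Iic b, X i) × X (b + 1)) ↦
        cast (congrArg X (Nat.le_antisymm (Finset.mem_Iic.1 i.2)
          (Nat.lt_of_not_le h))).symm p.2) =
        (fun x : X (b + 1) ↦ cast (congrArg X (Nat.le_antisymm (Finset.mem_Iic.1 i.2)
          (Nat.lt_of_not_le h))).symm x) ∘ Prod.snd := rfl
    rw [this]
    refine Measurable.comp ?_ measurable_snd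
    obtain ⟨i, hi⟩ := i
    simp only at h ⊢
    have hbe : i = b + 1 := Nat.le_antisymm (Finset.mem_Iic.1 hi) (Nat.lt_of_not_le h)
    subst hbe
    exact measurable_id

lemma Kernel.map_map' {α β γ δ : Type*} [MeasurableSpace α] [MeasurableSpace β]
    [MeasurableSpace γ] [MeasurableSpace δ] (κ : Kernel α β) {f : β → γ} {g : γ → δ}
    (hf : Measurable f) (hg : Measurable g) :
    (κ.map f).map g = κ.map (g ∘ f) := by
  rw [← Kernel.deterministic_comp_eq_map hf, ← Kernel.deterministic_comp_eq_map hg,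
    ← Kernel.comp_assoc, Kernel.deterministic_comp_deterministic,
    Kernel.deterministic_comp_eq_map]

lemma partialTraj_le (κ : ∀ n, Kernel (Π i : Finset.Iic n, X i) (X (n + 1))) {a c : ℕ}
    (h : c ≤ a) : partialTraj κ a c
      = Kernel.deterministic (frestrictLe₂ h) (measurable_frestrictLe₂ h) := by
  cases c with
  | zero => rfl
  | succ b => rw [partialTraj, dif_pos h]

lemma partialTraj_succ_map (κ : ∀ n, Kernel (Π i : Finset.Iic n, X i) (X (n + 1)))
    [∀ n, IsMarkovKernel (κ n)] (a c : ℕ) :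
    (partialTraj κ a (c + 1)).map (frestrictLe₂ (Nat.le_succ c)) = partialTraj κ a c := by
  rw [partialTraj]
  by_cases h : c + 1 ≤ a
  · rw [dif_pos h, ← Kernel.deterministic_comp_eq_map (measurable_frestrictLe₂ _),
      Kernel.deterministic_comp_deterministic,
      partialTraj_le κ (Nat.le_of_succ_le h)]
    rfl
  · rw [dif_neg h]
    rw [Kernel.map_map' _ (measurable_IicProdSucc c) (measurable_frestrictLe₂ _)]
    have hcomp : (frestrictLe₂ (π := X) (Nat.le_succ c)) ∘ (IicProdSucc c) = Prod.fst := by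
      ext p i
      simp only [Function.comp_apply, frestrictLe₂_apply, IicProdSucc,
        Finset.mem_Iic.1 i.2, dif_pos]
    rw [hcomp, ← Kernel.fst_eq, Kernel.fst_comp, Kernel.fst_prod, Kernel.id_comp]

/-- For `b ≤ c`, the pushforward of the partial trajectory kernel `η_{a,c}` under the
restriction map `π_{c → b}` is `η_{a,b}`. -/
theorem partialTraj_map_frestrictLe₂ (κ : ∀ n, Kernel (Π i : Finset.Iic n, X i) (X (n + 1)))
    [∀ n, IsMarkovKernel (κ n)] (a : ℕ) {b c : ℕ} (hbc : b ≤ c) :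
    (partialTraj κ a c).map (frestrictLe₂ hbc) = partialTraj κ a b := by
  induction c with
  | zero =>
    have hb : b = 0 := Nat.le_zero.1 hbc
    subst hb
    have : frestrictLe₂ (π := X) hbc = id := rfl
    rw [this, Kernel.map_id]
  | succ c ih =>
    rcases Nat.lt_or_ge b (c + 1) with h | h
    · have hbc' : b ≤ c := Nat.lt_succ_iff.1 h
      have : frestrictLe₂ (π := X) hbc
          = frestrictLe₂ hbc' ∘ frestrictLe₂ (Nat.le_succ c) :=
        (frestrictLe₂_comp_frestrictLe₂ hbc' (Nat.le_succ c)).symm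
      rw [this, ← Kernel.map_map' _ (measurable_frestrictLe₂ _) (measurable_frestrictLe₂ _),
        partialTraj_succ_map, ih hbc']
    · have hb : b = c + 1 := Nat.le_antisymm hbc h
      subst hb
      have : frestrictLe₂ (π := X) hbc = id := rfl
      rw [this, Kernel.map_id]
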